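/- For every n ≥ 2 and every k ≥ 0, h_{n,k} = C(k, 3k−n) + C(k+1, 3k+1−n), where C(a,b) is the binomial coefficient with the convention that C(a,b) = 0 when b < 0 or b > a. -/
import Mathlib


open Polynomial

/-- The maximal cube polynomials `H n` of the matchable Lucas cubes. -/
noncomputable def H : ℕ → Polynomial ℤ
  | 0 => 1
  | 1 => X
  | 2 => 2 * X
  | 3 => 3 * X
  | 4 => X + 2 * X ^ 2
  | (n + 5) => X * H (n + 3) + X * H (n + 2)

/-- `h n k` : the number of maximal `k`-dimensional cubes in `Ω_n`,
i.e. the coefficient of `x^k` in `H n`. -/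
noncomputable def h (n k : ℕ) : ℤ := (H n).coeff k

/-- `C a b` : binomial coefficient with the convention `C a b = 0` for `b < 0` or `b > a`. -/
def C (a : ℕ) (b : ℤ) : ℤ := if 0 ≤ b then (a.choose b.toNat : ℤ) else 0

lemma C_nat (a : ℕ) (b : ℤ) (c : ℕ) (hb : b = c) : C a b = a.choose c := by
  subst hb
  unfold _root_.C
  rw [if_pos (by positivity), Int.toNat_natCast]

lemma C_neg {a : ℕ} {b : ℤ} (hb : b < 0) : C a b = 0 := by
  unfold _root_.C
  rw [if_neg (by omega)]

lemma C_pascal (a : ℕ) (b : ℤ) : C (a + 1) b = C a (b - 1) + C a b := by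
  unfold _root_.C
  rcases lt_trichotomy b 0 with hb | hb | hb
  · rw [if_neg (by omega), if_neg (by omega), if_neg (by omega)]; ring
  · subst hb; norm_num
  · rw [if_pos (by omega), if_pos (by omega), if_pos (by omega)]
    have : b.toNat = (b - 1).toNat + 1 := by omega
    rw [this, Nat.choose_succ_succ]
    push_cast; ring

theorem h_eq_binomials (n : ℕ) (hn : 2 ≤ n) (k : ℕ) :
    h n k = C k (3 * (k : ℤ) - n) + C (k + 1) (3 * (k : ℤ) + 1 - n) := by
  induction n using Nat.strong_induction_on generalizing k with
  | _ n ih =>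
  match n, hn with
  | 2, _ =>
    rcases k with _ | _ | k
    · rw [C_neg (by norm_num), C_neg (by norm_num)]
      simp [h, H]
    · rw [C_nat 1 _ 1 (by norm_num), C_nat 2 _ 2 (by norm_num)]
      norm_num [h, H, coeff_X]
    · rw [C_nat _ _ (3 * k + 4) (by push_cast; ring),
        C_nat _ _ (3 * k + 5) (by push_cast; ring),
        Nat.choose_eq_zero_of_lt (by omega), Nat.choose_eq_zero_of_lt (by omega)]
      simp [h, H, coeff_X]
  | 3, _ =>
    rcases k with _ | _ | k
    · rw [C_neg (by norm_num), C_neg (by norm_num)]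
      simp [h, H]
    · rw [C_nat 1 _ 0 (by norm_num), C_nat 2 _ 1 (by norm_num)]
      norm_num [h, H, coeff_X]
    · rw [C_nat _ _ (3 * k + 3) (by push_cast; ring),
        C_nat _ _ (3 * k + 4) (by push_cast; ring),
        Nat.choose_eq_zero_of_lt (by omega), Nat.choose_eq_zero_of_lt (by omega)]
      simp [h, H, coeff_X]
  | 4, _ =>
    rcases k with _ | _ | _ | k
    · rw [C_neg (by norm_num), C_neg (by norm_num)]
      simp [h, H]
    · rw [C_neg (by norm_num), C_nat 2 _ 0 (by norm_num)]
      norm_num [h, H, coeff_X]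
    · rw [C_nat 2 _ 2 (by norm_num), C_nat 3 _ 3 (by norm_num)]
      norm_num [h, H, coeff_X, coeff_X_pow]
    · rw [C_nat _ _ (3 * k + 5) (by push_cast; ring),
        C_nat _ _ (3 * k + 6) (by push_cast; ring),
        Nat.choose_eq_zero_of_lt (by omega), Nat.choose_eq_zero_of_lt (by omega)]
      simp [h, H, coeff_X, coeff_X_pow]
  | (m + 5), _ =>
    rcases k with _ | k
    · have h0 : h (m + 5) 0 = 0 := by simp [h, H]
      rw [h0, C_neg (by push_cast; omega), C_neg (by push_cast; omega)]
      ring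
    · have e3 := ih (m + 3) (by omega) (by omega) k
      have e2 := ih (m + 2) (by omega) (by omega) k
      have p1 := C_pascal (k + 1) (3 * (k : ℤ) - 1 - m)
      have p2 := C_pascal k (3 * (k : ℤ) - 2 - m)
      have hrec : h (m + 5) (k + 1) = h (m + 3) k + h (m + 2) k := by
        simp [h, H, coeff_X_mul]
      rw [hrec, e3, e2]
      push_cast at p1 p2 ⊢
      ring_nf at p1 p2 ⊢
      linarith
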